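/- Gap-sum bound: let N be a positive integer, Δ > 0, and let u : Fin N → ℝ satisfy |u k − u k'| ≥ Δ for all k ≠ k'. Then for every j ∈ Fin N, the sum over all k with u k > u j of 1/(u k − u j)² is at most 2/Δ². -/

import Mathlib

open Finset

/-- In a finite set of reals pairwise separated by `Δ`, all `≥ a + Δ`, a maximal
element is at least `a + card * Δ`. -/
lemma sep_max_ge (a Δ : ℝ) (hΔ : 0 < Δ) :
    ∀ n (A : Finset ℝ), A.card = n → (∀ x ∈ A, a + Δ ≤ x) →
      (∀ x ∈ A, ∀ y ∈ A, x ≠ y → Δ ≤ |x - y|) →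
      ∀ x ∈ A, (∀ y ∈ A, y ≤ x) → a + A.card * Δ ≤ x := by
  intro n
  induction n with
  | zero => intro A hA _ _ x hx _; simp [Finset.card_eq_zero.mp hA] at hx
  | succ m ih =>
    intro A hA hlb hsep x hx hmax
    rcases Nat.eq_zero_or_pos m with hm | hm
    · subst hm
      have := hlb x hx
      rw [hA]; push_cast; linarith
    · -- A.erase x is nonempty
      have hcard : (A.erase x).card = m := by
        rw [Finset.card_erase_of_mem hx, hA]; omega
      have hne : (A.erase x).Nonempty := Finset.card_pos.mp (by omega)
      obtain ⟨y, hy, hymax⟩ := Finset.exists_max_image (A.erase x) id hne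
      have hyA : y ∈ A := Finset.mem_of_mem_erase hy
      have hyx : y ≠ x := Finset.ne_of_mem_erase hy
      have hyle : y ≤ x := hmax y hyA
      have hsepxy : Δ ≤ |x - y| := hsep x hx y hyA (Ne.symm hyx)
      have hxy : y + Δ ≤ x := by
        rcases abs_cases (x - y) with ⟨h1, h2⟩ | ⟨h1, h2⟩ <;> rw [h1] at hsepxy <;> linarith
      have ihy : a + (A.erase x).card * Δ ≤ y := by
        refine ih (A.erase x) hcard (fun z hz => hlb z (Finset.mem_of_mem_erase hz))
          (fun z hz w hw hzw => hsep z (Finset.mem_of_mem_erase hz) w (Finset.mem_of_mem_erase hw) hzw)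
          y hy (fun z hz => hymax z hz)
      rw [hA]; rw [hcard] at ihy
      push_cast at ihy ⊢
      linarith

/-- `∑_{m < n} 1/(m+1)^2 ≤ 2`. -/
lemma basel_bound (n : ℕ) :
    ∑ m ∈ Finset.range (n + 1), (1 : ℝ) / ((m : ℝ) + 1) ^ 2 ≤ 2 - 1 / ((n : ℝ) + 1) := by
  induction n with
  | zero => norm_num
  | succ k ih =>
    rw [Finset.sum_range_succ]
    have h1 : (0:ℝ) < (k:ℝ) + 1 := by positivity
    have h2 : (0:ℝ) < (k:ℝ) + 2 := by positivity
    have key : (1 : ℝ) / ((k:ℝ) + 1 + 1) ^ 2 ≤ 1 / ((k:ℝ) + 1) - 1 / ((k:ℝ) + 1 + 1) := by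
      rw [div_sub_div _ _ (ne_of_gt h1) (by positivity : ((k:ℝ) + 1 + 1) ≠ 0)]
      rw [div_le_div_iff₀ (by positivity) (by positivity)]
      nlinarith
    push_cast
    linarith

theorem gap_sum_bound (N : ℕ) (hN : 0 < N) (Δ : ℝ) (hΔ : 0 < Δ)
    (u : Fin N → ℝ) (hsep : ∀ k k', k ≠ k' → Δ ≤ |u k - u k'|)
    (j : Fin N) :
    ∑ k ∈ Finset.univ.filter (fun k => u j < u k), 1 / (u k - u j) ^ 2
      ≤ 2 / Δ ^ 2 := by
  set S := Finset.univ.filter (fun k => u j < u k) with hS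
  -- u is injective
  have huinj : Function.Injective u := by
    intro a b hab
    by_contra h
    have := hsep a b h
    rw [hab, sub_self, abs_zero] at this
    linarith
  -- rank function
  set r : Fin N → ℕ := fun k => (S.filter (fun k' => u k' ≤ u k)).card with hr
  have hmemS : ∀ k ∈ S, u j < u k := by
    intro k hk; rw [hS] at hk; exact (Finset.mem_filter.mp hk).2
  -- every element of S is at least u j + Δ
  have hlb : ∀ k ∈ S, u j + Δ ≤ u k := by
    intro k hk
    have hlt := hmemS k hk
    have hkj : k ≠ j := fun h => by rw [h] at hlt; exact lt_irrefl _ hlt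
    have := hsep k j hkj
    rcases abs_cases (u k - u j) with ⟨h1, _⟩ | ⟨h1, _⟩ <;> rw [h1] at this <;> linarith
  -- key: u j + r k * Δ ≤ u k for k ∈ S
  have hkey : ∀ k ∈ S, u j + (r k : ℝ) * Δ ≤ u k := by
    intro k hk
    set T := S.filter (fun k' => u k' ≤ u k) with hT
    have hinj : Set.InjOn u T := fun a _ b _ h => huinj h
    have hcard : (T.image u).card = T.card := Finset.card_image_of_injOn hinj
    have hukmem : u k ∈ T.image u := by
      refine Finset.mem_image_of_mem u ?_
      rw [hT]; exact Finset.mem_filter.mpr ⟨hk, le_refl _⟩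
    have := sep_max_ge (u j) Δ hΔ (T.image u).card (T.image u) rfl
      (fun x hx => by
        obtain ⟨a, ha, rfl⟩ := Finset.mem_image.mp hx
        exact hlb a (Finset.mem_filter.mp ha).1)
      (fun x hx y hy hxy => by
        obtain ⟨a, ha, rfl⟩ := Finset.mem_image.mp hx
        obtain ⟨b, hb, rfl⟩ := Finset.mem_image.mp hy
        exact hsep a b (fun h => hxy (by rw [h])))
      (u k) hukmem
      (fun y hy => by
        obtain ⟨a, ha, rfl⟩ := Finset.mem_image.mp hy
        exact (Finset.mem_filter.mp ha).2)
    rw [hcard] at this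
    exact this
  -- r k ≥ 1 on S
  have hr1 : ∀ k ∈ S, 1 ≤ r k := by
    intro k hk
    have : k ∈ S.filter (fun k' => u k' ≤ u k) := Finset.mem_filter.mpr ⟨hk, le_refl _⟩
    exact Finset.card_pos.mpr ⟨k, this⟩
  -- r is injective on S
  have hrinj : Set.InjOn r S := by
    have hmono : ∀ a ∈ S, ∀ b ∈ S, u a < u b → r a < r b := by
      intro a ha b hb hlt
      have hsub : S.filter (fun k' => u k' ≤ u a) ⊆ S.filter (fun k' => u k' ≤ u b) := by
        intro x hx
        rw [Finset.mem_filter] at hx ⊢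
        exact ⟨hx.1, hx.2.trans hlt.le⟩
      have hbmem : b ∈ S.filter (fun k' => u k' ≤ u b) := Finset.mem_filter.mpr ⟨hb, le_refl _⟩
      have hbnot : b ∉ S.filter (fun k' => u k' ≤ u a) := by
        rw [Finset.mem_filter]
        push_neg
        intro _
        linarith
      exact Finset.card_lt_card (Finset.ssubset_iff_of_subset hsub |>.mpr ⟨b, hbmem, hbnot⟩)
    intro a ha b hb hab
    by_contra hne
    have hune : u a ≠ u b := fun h => hne (huinj h)
    rcases lt_or_gt_of_ne hune with h | h
    · exact absurd hab (Nat.ne_of_lt (hmono a ha b hb h))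
    · exact absurd hab.symm (Nat.ne_of_lt (hmono b hb a ha h))
  -- bound each term and reindex
  have hterm : ∀ k ∈ S, 1 / (u k - u j) ^ 2 ≤ 1 / ((r k - 1 : ℕ) + 1 : ℝ) ^ 2 / Δ ^ 2 := by
    intro k hk
    have h1 := hr1 k hk
    have hrk : ((r k - 1 : ℕ) + 1 : ℝ) = (r k : ℝ) := by
      have : r k - 1 + 1 = r k := Nat.succ_pred_eq_of_pos h1
      exact_mod_cast congrArg (Nat.cast : ℕ → ℝ) this
    rw [hrk, div_div]
    have hge := hkey k hk
    have hr0 : (1:ℝ) ≤ (r k : ℝ) := by exact_mod_cast h1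
    have hrpos : (0:ℝ) < (r k : ℝ) * Δ := by nlinarith
    have hsub : (r k : ℝ) * Δ ≤ u k - u j := by linarith
    apply one_div_le_one_div_of_le (by positivity)
    calc (r k : ℝ) ^ 2 * Δ ^ 2 = ((r k : ℝ) * Δ) ^ 2 := by ring
      _ ≤ (u k - u j) ^ 2 := pow_le_pow_left₀ hrpos.le hsub 2
  calc ∑ k ∈ S, 1 / (u k - u j) ^ 2
      ≤ ∑ k ∈ S, 1 / ((r k - 1 : ℕ) + 1 : ℝ) ^ 2 / Δ ^ 2 := Finset.sum_le_sum hterm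
    _ = ∑ m ∈ S.image (fun k => r k - 1), 1 / ((m : ℝ) + 1) ^ 2 / Δ ^ 2 := by
        rw [Finset.sum_image]
        intro a ha b hb hab
        have h1a := hr1 a ha
        have h1b := hr1 b hb
        exact hrinj ha hb (by beta_reduce at hab; omega)
    _ ≤ ∑ m ∈ Finset.range N, 1 / ((m : ℝ) + 1) ^ 2 / Δ ^ 2 := by
        refine Finset.sum_le_sum_of_subset_of_nonneg ?_ (fun m _ _ => by positivity)
        intro m hm
        obtain ⟨k, hk, rfl⟩ := Finset.mem_image.mp hm
        rw [Finset.mem_range]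
        have hA : r k ≤ S.card := Finset.card_filter_le S (fun k' => u k' ≤ u k)
        have hSle : S.card ≤ N := by
          have := Finset.card_le_card (Finset.filter_subset (fun k => u j < u k) Finset.univ)
          simpa using this
        have := hr1 k hk
        omega
    _ = (∑ m ∈ Finset.range N, 1 / ((m : ℝ) + 1) ^ 2) / Δ ^ 2 := by
        rw [Finset.sum_div]
    _ ≤ 2 / Δ ^ 2 := by
        obtain ⟨n, hn⟩ : ∃ n, N = n + 1 := ⟨N - 1, by omega⟩
        have hb := basel_bound n
        have hpos : (0:ℝ) ≤ 1 / ((n:ℝ) + 1) := by positivity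
        rw [hn]
        gcongr
        linarith
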